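/- With the grading of g by wght(Y) = 1, wght(H) = wght(E) = 0, wght(X) = −1, wght(ε_i) = −i, wght(η) = 5−2n, the following hold: (1) distinct graded components of g are orthogonal for (·,·), i.e., (g_p, g_q) = 0 for p ≠ q; (2) τ maps the weight-p part of span{Y, H, E} into the weight −p part of g for every p ≥ 0; (3) ([A, x], y) = (x, [τ(A), y]) for all x, y ∈ g and all A ∈ span{Y, H, E}. -/

import Mathlib

noncomputable section

open scoped BigOperators

/-- The underlying vector space of `gl₂(ℝ)`, with basis `Y, H, E, X` at indices `0,1,2,3`. -/
abbrev G2 : Type := Fin 4 → ℝ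

/-- The underlying vector space of the Heisenberg algebra `heis_{2n-5}`:
coefficients of `ε_1, …, ε_{2n-6}` together with the coefficient of `η`. -/
abbrev Hs (n : ℕ) : Type := (Fin (2*n-6) → ℝ) × ℝ

/-- The underlying vector space of `g = gl₂(ℝ) ⋉ heis_{2n-5}`. -/
abbrev Gg (n : ℕ) : Type := G2 × Hs n

/-- The basis vector `ε_p` (1-based index `p`). -/
def epsV (n : ℕ) (p : ℕ) : Hs n := (fun i => if i.val + 1 = p then 1 else 0, 0)

/-- The central basis vector `η`. -/
def etaV (n : ℕ) : Hs n := (0, 1)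

/-- The Heisenberg bracket, encoding `[ε_i, ε_{2n-5-i}] = (-1)^i η`. -/
def heisBr (n : ℕ) (x y : Hs n) : Hs n :=
  (0, ∑ i : Fin (2*n-6), (-1 : ℝ)^(i.val+1) * x.1 i * y.1 i.rev)

/-- The `gl₂(ℝ)` bracket: `[X,Y]=H`, `[H,X]=2X`, `[H,Y]=-2Y`, and `E` is central. -/
def gl2Br (a b : G2) : G2 :=
  ![-2*(a 1 * b 0 - a 0 * b 1), a 3 * b 0 - a 0 * b 3, 0, 2*(a 1 * b 3 - a 3 * b 1)]

/-- The map `φ : gl₂(ℝ) → End(heis_{2n-5})` from the paper. -/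
def phi (n : ℕ) (a : G2) (v : Hs n) : Hs n :=
  (fun i =>
      a 1 * (2*(i.val:ℝ) + 7 - 2*(n:ℝ)) * v.1 i
    + a 2 * v.1 i
    + a 3 * (if h : 0 < i.val then v.1 ⟨i.val - 1, by have := i.isLt; omega⟩ else 0)
    + a 0 * (((i.val:ℝ)+1) * (2*(n:ℝ) - 7 - (i.val:ℝ))) *
        (if h : i.val + 1 < 2*n-6 then v.1 ⟨i.val+1, h⟩ else 0),
   2 * a 2 * v.2)

/-- The bracket of the semidirect product `g = gl₂(ℝ) ⋉_φ heis_{2n-5}`. -/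
def gBr (n : ℕ) (x y : Gg n) : Gg n :=
  (gl2Br x.1 y.1, phi n x.1 y.2 - phi n y.1 x.2 + heisBr n x.2 y.2)

def bY (n : ℕ) : Gg n := (![1,0,0,0], 0)
def bH (n : ℕ) : Gg n := (![0,1,0,0], 0)
def bE (n : ℕ) : Gg n := (![0,0,1,0], 0)
def bX (n : ℕ) : Gg n := (![0,0,0,1], 0)
def bEps (n : ℕ) (p : ℕ) : Gg n := (0, epsV n p)
def bEta (n : ℕ) : Gg n := (0, etaV n)

/-- The weight-`w` graded component of `g` in the grading of `s^{k,n}`: the span of the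
basis elements of weight `w`, where `wght Y = 1`, `wght H = wght E = 0`, `wght X = -1`,
`wght ε_p = n-4-k-p`, `wght η = -3-2k`. -/
def gComp (n k : ℕ) (w : ℤ) : Submodule ℝ (Gg n) :=
  Submodule.span ℝ {v : Gg n |
    (v = bY n ∧ w = 1) ∨ ((v = bH n ∨ v = bE n) ∧ w = 0) ∨ (v = bX n ∧ w = -1) ∨
    (∃ p : ℕ, 1 ≤ p ∧ p ≤ 2*n-6 ∧ v = bEps n p ∧ w = (n:ℤ) - 4 - (k:ℤ) - (p:ℤ)) ∨
    (v = bEta n ∧ w = -3 - 2*(k:ℤ))}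

/-- The negative part `m = s^{k,n}` of `g` (for `0 ≤ k ≤ n-4`): the span of the basis
elements of negative weight, i.e. of `X`, `ε_p` for `n-3-k ≤ p ≤ 2n-6`, and `η`. -/
def mSub (n k : ℕ) : Submodule ℝ (Gg n) where
  carrier := {x | x.1 0 = 0 ∧ x.1 1 = 0 ∧ x.1 2 = 0 ∧
    ∀ i : Fin (2*n-6), ((i.val:ℤ) + 1 < (n:ℤ) - 3 - (k:ℤ) → x.2.1 i = 0)}
  add_mem' := by
    rintro a b ⟨ha0, ha1, ha2, ha3⟩ ⟨hb0, hb1, hb2, hb3⟩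
    exact ⟨by simp [ha0, hb0], by simp [ha1, hb1], by simp [ha2, hb2],
      fun i hi => by simp [ha3 i hi, hb3 i hi]⟩
  zero_mem' := ⟨rfl, rfl, rfl, fun i _ => rfl⟩
  smul_mem' := by
    rintro c a ⟨ha0, ha1, ha2, ha3⟩
    exact ⟨by simp [ha0], by simp [ha1], by simp [ha2], fun i hi => by simp [ha3 i hi]⟩

/-- The non-negative part `g⁰` of `g` in the grading of `s^{k,n}`. -/
def g0Sub (n k : ℕ) : Submodule ℝ (Gg n) where
  carrier := {x | x.1 3 = 0 ∧ x.2.2 = 0 ∧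
    ∀ i : Fin (2*n-6), ((n:ℤ) - 3 - (k:ℤ) ≤ (i.val:ℤ) + 1 → x.2.1 i = 0)}
  add_mem' := by
    rintro a b ⟨ha0, ha1, ha3⟩ ⟨hb0, hb1, hb3⟩
    exact ⟨by simp [ha0, hb0], by simp [ha1, hb1], fun i hi => by simp [ha3 i hi, hb3 i hi]⟩
  zero_mem' := ⟨rfl, rfl, fun i _ => rfl⟩
  smul_mem' := by
    rintro c a ⟨ha0, ha1, ha3⟩
    exact ⟨by simp [ha0], by simp [ha1], fun i hi => by simp [ha3 i hi]⟩

/-- The negative part `m` of `g`, as a type. -/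
abbrev MT (n k : ℕ) := ↥(mSub n k)

/-- The projection `π_m : g → m` along `g⁰`. -/
def Pm (n k : ℕ) (x : Gg n) : Gg n :=
  (![0, 0, 0, x.1 3],
   (fun i => if (n:ℤ) - 3 - (k:ℤ) ≤ (i.val:ℤ) + 1 then x.2.1 i else 0, x.2.2))

lemma Pm_mem (n k : ℕ) (x : Gg n) : Pm n k x ∈ mSub n k := by
  refine ⟨?_, ?_, ?_, fun i hi => ?_⟩
  · simp [Pm]
  · simp [Pm]
  · simp [Pm]
  · show (if (n:ℤ) - 3 - (k:ℤ) ≤ (i.val:ℤ) + 1 then x.2.1 i else 0) = 0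
    rw [if_neg (by omega)]

/-- The projection `π_m : g → m`, viewed as a map into `m`. -/
def ptoM (n k : ℕ) (x : Gg n) : MT n k := ⟨Pm n k x, Pm_mem n k x⟩

/-- The Lie bracket of `m` (the bracket of `g` restricted to `m`; since `m` is closed
under the bracket, composing with the projection `π_m` does not change the value). -/
def mBrM (n k : ℕ) (x y : MT n k) : MT n k := ptoM n k (gBr n x.1 y.1)

/-- `ψ` is an ℝ-linear map `m → g`, i.e. an element of `C¹(m,g)`. -/
def IsLin1 (n k : ℕ) (ψ : MT n k → Gg n) : Prop :=
  (∀ x y, ψ (x + y) = ψ x + ψ y) ∧ ∀ (c : ℝ) (x), ψ (c • x) = c • ψ x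

/-- `ψ` is an alternating ℝ-bilinear map `m × m → g`, i.e. an element of `C²(m,g)`. -/
def IsAlt2 (n k : ℕ) (ψ : MT n k → MT n k → Gg n) : Prop :=
  (∀ y, IsLin1 n k (fun x => ψ x y)) ∧ (∀ x, IsLin1 n k (ψ x)) ∧ ∀ x, ψ x x = 0

/-- The coboundary `∂ : C¹(m,g) → C²(m,g)`,
`(∂φ)(x,y) = [x, φ y] - [y, φ x] + φ [x,y]`. -/
def cobound (n k : ℕ) (φ : MT n k → Gg n) : MT n k → MT n k → Gg n :=
  fun x y => gBr n x.1 (φ y) - gBr n y.1 (φ x) + φ (mBrM n k x y)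

/-- A 1-cochain is homogeneous of weight `w` if `ψ(g_p) ⊆ g_{p+w}` for all `p < 0`. -/
def Homog1 (n k : ℕ) (w : ℤ) (ψ : MT n k → Gg n) : Prop :=
  ∀ p : ℤ, p < 0 → ∀ x : MT n k, (x : Gg n) ∈ gComp n k p → ψ x ∈ gComp n k (p + w)

/-- A 2-cochain is homogeneous of weight `w` if `ψ(g_p × g_q) ⊆ g_{p+q+w}` for `p,q < 0`. -/
def Homog2 (n k : ℕ) (w : ℤ) (ψ : MT n k → MT n k → Gg n) : Prop :=
  ∀ p q : ℤ, p < 0 → q < 0 → ∀ x y : MT n k,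
    (x : Gg n) ∈ gComp n k p → (y : Gg n) ∈ gComp n k q → ψ x y ∈ gComp n k (p + q + w)

/-- `C¹₊(m,g)`: the span of the homogeneous 1-cochains of positive weight. -/
def C1plus (n k : ℕ) : Submodule ℝ (MT n k → Gg n) :=
  Submodule.span ℝ {ψ | IsLin1 n k ψ ∧ ∃ w : ℤ, 0 < w ∧ Homog1 n k w ψ}

/-- `C²₊(m,g)`: the span of the homogeneous alternating 2-cochains of positive weight. -/
def C2plus (n k : ℕ) : Submodule ℝ (MT n k → MT n k → Gg n) :=
  Submodule.span ℝ {ψ | IsAlt2 n k ψ ∧ ∃ w : ℤ, 0 < w ∧ Homog2 n k w ψ}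

/-- The image `∂(C¹₊(m,g)) ⊆ C²(m,g)`. -/
def imDel (n k : ℕ) : Submodule ℝ (MT n k → MT n k → Gg n) :=
  Submodule.span ℝ (cobound n k '' {φ | φ ∈ C1plus n k})

/-- The action of `A ∈ g⁰` on 1-cochains: `(A·ψ)(x) = [A, ψ x] - ψ(π_m [A, x])`. -/
def act1 (n k : ℕ) (A : Gg n) (ψ : MT n k → Gg n) : MT n k → Gg n :=
  fun x => gBr n A (ψ x) - ψ (ptoM n k (gBr n A x.1))

/-- The action of `A ∈ g⁰` on 2-cochains:
`(A·ψ)(x,y) = [A, ψ x y] - ψ(π_m [A, x]) y - ψ x (π_m [A, y])`. -/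
def act2 (n k : ℕ) (A : Gg n) (ψ : MT n k → MT n k → Gg n) : MT n k → MT n k → Gg n :=
  fun x y => gBr n A (ψ x y) - ψ (ptoM n k (gBr n A x.1)) y - ψ x (ptoM n k (gBr n A y.1))

/-- The coefficient of `ε_p` (the dual functional `ε*_p`). -/
def epsCoef (n : ℕ) (p : ℕ) (x : Gg n) : ℝ :=
  if h : 1 ≤ p ∧ p ≤ 2*n-6 then x.2.1 ⟨p-1, by omega⟩ else 0

/-- The 1-cochain `ε*_{n-3-k} ⊗ ε_{2n-6}`. -/
def cA (n k : ℕ) : MT n k → Gg n := fun x => epsCoef n (n-3-k) x.1 • bEps n (2*n-6)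

/-- The 1-cochain `X* ⊗ ε_{n-4-k}`. -/
def cB (n k : ℕ) : MT n k → Gg n := fun x => (x : Gg n).1 3 • bEps n (n-4-k)

/-- The 2-cochain `X* ∧ ε*_{n-1+k} ⊗ η`. -/
def cC (n k : ℕ) : MT n k → MT n k → Gg n := fun x y =>
  ((x : Gg n).1 3 * epsCoef n (n-1+k) y.1 - (y : Gg n).1 3 * epsCoef n (n-1+k) x.1) • bEta n

/-- The 2-cochain `ε*_{n-3-k} ∧ η* ⊗ ε_{2n-6}`. -/
def cD (n k : ℕ) : MT n k → MT n k → Gg n := fun x y =>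
  (epsCoef n (n-3-k) x.1 * (y : Gg n).2.2 - epsCoef n (n-3-k) y.1 * (x : Gg n).2.2) • bEps n (2*n-6)

/-- The inner product on `g` for which the basis `{Y,H,E,X,ε_1,…,ε_{2n-6},η}` is
orthogonal, with `|Y|² = |X|² = |η|² = 1`, `|H|² = |E|² = 2`, and
`|ε_p|² = (p-1)!/(2n-6-p)!`. -/
def Bform (n : ℕ) (x y : Gg n) : ℝ :=
  x.1 0 * y.1 0 + 2 * (x.1 1 * y.1 1) + 2 * (x.1 2 * y.1 2) + x.1 3 * y.1 3 +
  (∑ i : Fin (2*n-6),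
    ((Nat.factorial i.val : ℝ) / (Nat.factorial (2*n-7-i.val) : ℝ)) * x.2.1 i * y.2.1 i) +
  x.2.2 * y.2.2

/-- The linear map `τ : span{Y,H,E} → g` with `τ(Y) = X`, `τ(H) = H`, `τ(E) = E`
(extended to all of `g` by the same formula on coordinates). -/
def tauFun (n : ℕ) (x : Gg n) : Gg n := (![0, x.1 1, x.1 2, x.1 0], 0)

section Aux

lemma Bform_zero_right (n : ℕ) (x : Gg n) : Bform n x 0 = 0 := by
  simp [Bform]

lemma Bform_zero_left (n : ℕ) (y : Gg n) : Bform n 0 y = 0 := by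
  simp [Bform]

lemma Bform_add_right (n : ℕ) (x y z : Gg n) :
    Bform n x (y + z) = Bform n x y + Bform n x z := by
  simp only [Bform, Prod.fst_add, Prod.snd_add, Pi.add_apply, mul_add, add_mul,
    Finset.sum_add_distrib]
  ring

lemma Bform_add_left (n : ℕ) (x y z : Gg n) :
    Bform n (x + y) z = Bform n x z + Bform n y z := by
  simp only [Bform, Prod.fst_add, Prod.snd_add, Pi.add_apply, mul_add, add_mul,
    Finset.sum_add_distrib]
  ring

lemma Bform_smul_right (n : ℕ) (c : ℝ) (x y : Gg n) :
    Bform n x (c • y) = c * Bform n x y := by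
  have hs : (∑ i : Fin (2*n-6),
      ((Nat.factorial i.val : ℝ) / (Nat.factorial (2*n-7-i.val) : ℝ)) * x.2.1 i * (c * y.2.1 i))
      = c * ∑ i : Fin (2*n-6),
      ((Nat.factorial i.val : ℝ) / (Nat.factorial (2*n-7-i.val) : ℝ)) * x.2.1 i * y.2.1 i := by
    rw [Finset.mul_sum]
    exact Finset.sum_congr rfl fun i _ => by ring
  simp only [Bform, Prod.smul_fst, Prod.smul_snd, Pi.smul_apply, smul_eq_mul]
  rw [hs]; ring

lemma Bform_smul_left (n : ℕ) (c : ℝ) (x y : Gg n) :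
    Bform n (c • x) y = c * Bform n x y := by
  have hs : (∑ i : Fin (2*n-6),
      ((Nat.factorial i.val : ℝ) / (Nat.factorial (2*n-7-i.val) : ℝ)) * (c * x.2.1 i) * y.2.1 i)
      = c * ∑ i : Fin (2*n-6),
      ((Nat.factorial i.val : ℝ) / (Nat.factorial (2*n-7-i.val) : ℝ)) * x.2.1 i * y.2.1 i := by
    rw [Finset.mul_sum]
    exact Finset.sum_congr rfl fun i _ => by ring
  simp only [Bform, Prod.smul_fst, Prod.smul_snd, Pi.smul_apply, smul_eq_mul]
  rw [hs]; ring

end Aux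

lemma fin_sum_to_range (N : ℕ) (f : Fin N → ℝ) (g : ℕ → ℝ)
    (h : ∀ i : Fin N, f i = g i.val) :
    ∑ i : Fin N, f i = ∑ j ∈ Finset.range N, g j := by
  rw [← Fin.sum_univ_eq_sum_range]
  exact Finset.sum_congr rfl fun i _ => h i

/-- The squared norm of `ε_{j+1}`, as a function of `j : ℕ`. -/
def sC (n j : ℕ) : ℝ := (Nat.factorial j : ℝ) / (Nat.factorial (2*n-7-j) : ℝ)

/-- Extension of a `Fin N`-indexed family to `ℕ`, by zero. -/
def ext0 (N : ℕ) (u : Fin N → ℝ) (j : ℕ) : ℝ := if h : j < N then u ⟨j, h⟩ else 0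

lemma fact_step (n j : ℕ) (hn : 6 ≤ n) (hj : j < 2*n-7) :
    sC n j * (((j:ℝ)+1) * (2*(n:ℝ) - 7 - (j:ℝ))) = sC n (j+1) := by
  unfold sC
  have h1 : 2*n-7-j = (2*n-8-j) + 1 := by omega
  have h2 : 2*n-7-(j+1) = 2*n-8-j := by omega
  have e2 : ((2*n-8-j : ℕ) : ℝ) + 1 = 2*(n:ℝ) - 7 - (j:ℝ) := by
    have h : (2*n-8-j) + j + 8 = 2*n := by omega
    have := congrArg (Nat.cast : ℕ → ℝ) h
    push_cast at this
    linarith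
  rw [h1, h2, Nat.factorial_succ, Nat.factorial_succ]
  have hne : (Nat.factorial (2*n-8-j) : ℝ) ≠ 0 :=
    Nat.cast_ne_zero.2 (Nat.factorial_ne_zero _)
  push_cast
  field_simp
  rw [← e2]

lemma shift_sum (n : ℕ) (hn : 6 ≤ n) (u v : Fin (2*n-6) → ℝ) :
    ∑ i : Fin (2*n-6), (Nat.factorial i.val : ℝ) / (Nat.factorial (2*n-7-i.val) : ℝ) *
      (((i.val:ℝ)+1) * (2*(n:ℝ) - 7 - (i.val:ℝ))) *
      (if h : i.val + 1 < 2*n-6 then u ⟨i.val+1, h⟩ else 0) * v i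
    = ∑ i : Fin (2*n-6), (Nat.factorial i.val : ℝ) / (Nat.factorial (2*n-7-i.val) : ℝ) *
      u i * (if h : 0 < i.val then v ⟨i.val-1, by omega⟩ else 0) := by
  have hL : ∑ i : Fin (2*n-6), (Nat.factorial i.val : ℝ) / (Nat.factorial (2*n-7-i.val) : ℝ) *
      (((i.val:ℝ)+1) * (2*(n:ℝ) - 7 - (i.val:ℝ))) *
      (if h : i.val + 1 < 2*n-6 then u ⟨i.val+1, h⟩ else 0) * v i
      = ∑ j ∈ Finset.range (2*n-6),
        sC n j * (((j:ℝ)+1) * (2*(n:ℝ) - 7 - (j:ℝ))) * ext0 (2*n-6) u (j+1) * ext0 (2*n-6) v j := by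
    refine fin_sum_to_range _ _ _ fun i => ?_
    simp only [sC, ext0, dif_pos i.isLt, Fin.eta]
  have hR : ∑ i : Fin (2*n-6), (Nat.factorial i.val : ℝ) / (Nat.factorial (2*n-7-i.val) : ℝ) *
      u i * (if h : 0 < i.val then v ⟨i.val-1, by omega⟩ else 0)
      = ∑ j ∈ Finset.range (2*n-6),
        sC n j * ext0 (2*n-6) u j * (if 0 < j then ext0 (2*n-6) v (j-1) else 0) := by
    refine fin_sum_to_range _ _ _ fun i => ?_
    by_cases h0 : 0 < i.val
    · have hlt : i.val - 1 < 2*n-6 := by omega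
      simp only [sC, ext0, dif_pos i.isLt, dif_pos h0, if_pos h0, dif_pos hlt, Fin.eta]
    · simp only [sC, ext0, dif_pos i.isLt, dif_neg h0, if_neg h0, Fin.eta]
  rw [hL, hR]
  obtain ⟨M, hM⟩ : ∃ M, 2*n-6 = M + 1 := ⟨2*n-7, by omega⟩
  rw [show Finset.range (2*n-6) = Finset.range (M+1) from by rw [hM],
    Finset.sum_range_succ, Finset.sum_range_succ']
  have hlast : ext0 (2*n-6) u (M + 1) = 0 := by
    unfold ext0
    rw [dif_neg (by omega)]
  have hfirst : sC n 0 * ext0 (2*n-6) u 0 * (if 0 < 0 then ext0 (2*n-6) v (0-1) else 0) = 0 := by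
    simp
  rw [hlast, hfirst]
  simp only [mul_zero, zero_mul, add_zero]
  refine Finset.sum_congr rfl fun j hj => ?_
  have hjM : j < M := Finset.mem_range.1 hj
  have hstep : sC n j * (((j:ℝ)+1) * (2*(n:ℝ) - 7 - (j:ℝ))) = sC n (j+1) :=
    fact_step n j hn (by omega)
  rw [if_pos (Nat.succ_pos j)]
  calc sC n j * (((j:ℝ)+1) * (2*(n:ℝ) - 7 - (j:ℝ))) * ext0 (2*n-6) u (j+1) * ext0 (2*n-6) v j
      = (sC n j * (((j:ℝ)+1) * (2*(n:ℝ) - 7 - (j:ℝ)))) * ext0 (2*n-6) u (j+1) * ext0 (2*n-6) v j := by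
        ring
    _ = sC n (j+1) * ext0 (2*n-6) u (j+1) * ext0 (2*n-6) v j := by rw [hstep]
    _ = sC n (j+1) * ext0 (2*n-6) u (j+1) * ext0 (2*n-6) v (j+1-1) := by norm_num

lemma phi_zero (n : ℕ) (a : G2) : phi n a (0 : Hs n) = 0 := by
  unfold phi
  refine Prod.ext ?_ (by simp)
  funext i
  simp

lemma heisBr_zero_left (n : ℕ) (v : Hs n) : heisBr n (0 : Hs n) v = 0 := by
  unfold heisBr
  refine Prod.ext (by simp) (by simp)

lemma gBr_of_left (n : ℕ) (A z : Gg n) (hA2 : A.2 = 0) :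
    gBr n A z = (gl2Br A.1 z.1, phi n A.1 z.2) := by
  unfold gBr
  rw [hA2, phi_zero, heisBr_zero_left]
  simp

lemma heis_adj (n : ℕ) (hn : 6 ≤ n) (A1 : G2) (hA3 : A1 3 = 0) (u v : Hs n) :
    (∑ i : Fin (2*n-6), (Nat.factorial i.val : ℝ) / (Nat.factorial (2*n-7-i.val) : ℝ) *
        (phi n A1 u).1 i * v.1 i)
    = ∑ i : Fin (2*n-6), (Nat.factorial i.val : ℝ) / (Nat.factorial (2*n-7-i.val) : ℝ) *
        u.1 i * (phi n (![0, A1 1, A1 2, A1 0]) v).1 i := by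
  have hL : (∑ i : Fin (2*n-6), (Nat.factorial i.val : ℝ) / (Nat.factorial (2*n-7-i.val) : ℝ) *
        (phi n A1 u).1 i * v.1 i)
      = (∑ i : Fin (2*n-6), (Nat.factorial i.val : ℝ) / (Nat.factorial (2*n-7-i.val) : ℝ) *
          (A1 1 * (2*(i.val:ℝ) + 7 - 2*(n:ℝ)) * u.1 i + A1 2 * u.1 i) * v.1 i)
      + A1 0 * ∑ i : Fin (2*n-6), (Nat.factorial i.val : ℝ) / (Nat.factorial (2*n-7-i.val) : ℝ) *
          (((i.val:ℝ)+1) * (2*(n:ℝ) - 7 - (i.val:ℝ))) *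
          (if h : i.val + 1 < 2*n-6 then u.1 ⟨i.val+1, h⟩ else 0) * v.1 i := by
    rw [Finset.mul_sum, ← Finset.sum_add_distrib]
    refine Finset.sum_congr rfl fun i _ => ?_
    simp only [phi, hA3]
    ring
  have hR : (∑ i : Fin (2*n-6), (Nat.factorial i.val : ℝ) / (Nat.factorial (2*n-7-i.val) : ℝ) *
        u.1 i * (phi n (![0, A1 1, A1 2, A1 0]) v).1 i)
      = (∑ i : Fin (2*n-6), (Nat.factorial i.val : ℝ) / (Nat.factorial (2*n-7-i.val) : ℝ) *
          (A1 1 * (2*(i.val:ℝ) + 7 - 2*(n:ℝ)) * u.1 i + A1 2 * u.1 i) * v.1 i)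
      + A1 0 * ∑ i : Fin (2*n-6), (Nat.factorial i.val : ℝ) / (Nat.factorial (2*n-7-i.val) : ℝ) *
          u.1 i * (if h : 0 < i.val then v.1 ⟨i.val-1, by omega⟩ else 0) := by
    rw [Finset.mul_sum, ← Finset.sum_add_distrib]
    refine Finset.sum_congr rfl fun i _ => ?_
    have e0 : (![0, A1 1, A1 2, A1 0] : G2) 0 = 0 := by simp
    have e1 : (![0, A1 1, A1 2, A1 0] : G2) 1 = A1 1 := by simp
    have e2 : (![0, A1 1, A1 2, A1 0] : G2) 2 = A1 2 := by simp
    have e3 : (![0, A1 1, A1 2, A1 0] : G2) 3 = A1 0 := by simp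
    simp only [phi, e0, e1, e2, e3]
    by_cases h0 : 0 < i.val
    · rw [dif_pos h0]
      ring
    · rw [dif_neg h0]
      ring
  rw [hL, hR, shift_sum n hn u.1 v.1]

lemma adj_key (n : ℕ) (hn : 6 ≤ n) (A : Gg n) (hA3 : A.1 3 = 0) (hA2 : A.2 = 0)
    (x y : Gg n) : Bform n (gBr n A x) y = Bform n x (gBr n (tauFun n A) y) := by
  rw [gBr_of_left n A x hA2, gBr_of_left n (tauFun n A) y rfl]
  have htau : (tauFun n A).1 = ![0, A.1 1, A.1 2, A.1 0] := rfl
  simp only [Bform, htau]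
  rw [heis_adj n hn A.1 hA3 x.2 y.2]
  simp only [phi, gl2Br, hA3, Matrix.cons_val_zero, Matrix.cons_val_one, Matrix.head_cons,
    Matrix.cons_val_two, Matrix.cons_val_three, Matrix.tail_cons]
  norm_num
  ring

lemma Bform_eps_eps (n : ℕ) (r s : ℕ) (hrs : r ≠ s) : Bform n (bEps n r) (bEps n s) = 0 := by
  have hs : ∀ i : Fin (2*n-6), (Nat.factorial i.val : ℝ) / (Nat.factorial (2*n-7-i.val) : ℝ) *
      (if i.val + 1 = r then (1:ℝ) else 0) * (if i.val + 1 = s then (1:ℝ) else 0) = 0 := by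
    intro i
    by_cases h1 : i.val + 1 = r
    · rw [if_neg (show ¬ i.val + 1 = s by omega)]; ring
    · rw [if_neg h1]; ring
  simp only [Bform, bEps, epsV]
  rw [Finset.sum_eq_zero fun i _ => hs i]
  simp

lemma Bform_gen (n : ℕ) (k : ℕ) (p q : ℤ) (hpq : p ≠ q) (u v : Gg n)
    (hu : (u = bY n ∧ p = 1) ∨ ((u = bH n ∨ u = bE n) ∧ p = 0) ∨ (u = bX n ∧ p = -1) ∨
      (∃ r : ℕ, 1 ≤ r ∧ r ≤ 2*n-6 ∧ u = bEps n r ∧ p = (n:ℤ) - 4 - (k:ℤ) - (r:ℤ)) ∨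
      (u = bEta n ∧ p = -3 - 2*(k:ℤ)))
    (hv : (v = bY n ∧ q = 1) ∨ ((v = bH n ∨ v = bE n) ∧ q = 0) ∨ (v = bX n ∧ q = -1) ∨
      (∃ r : ℕ, 1 ≤ r ∧ r ≤ 2*n-6 ∧ v = bEps n r ∧ q = (n:ℤ) - 4 - (k:ℤ) - (r:ℤ)) ∨
      (v = bEta n ∧ q = -3 - 2*(k:ℤ))) :
    Bform n u v = 0 := by
  rcases hu with ⟨hu, hp⟩ | ⟨(hu | hu), hp⟩ | ⟨hu, hp⟩ | ⟨r, hr1, hr2, hu, hp⟩ | ⟨hu, hp⟩ <;>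
  rcases hv with ⟨hv, hq⟩ | ⟨(hv | hv), hq⟩ | ⟨hv, hq⟩ | ⟨s, hs1, hs2, hv, hq⟩ | ⟨hv, hq⟩ <;>
  subst hu <;> subst hv <;>
  first
    | omega
    | exact Bform_eps_eps n r s (by omega)
    | simp [Bform, bY, bH, bE, bX, bEps, bEta, epsV, etaV]

lemma tau_add (n : ℕ) (x y : Gg n) : tauFun n (x + y) = tauFun n x + tauFun n y := by
  refine Prod.ext ?_ (by simp [tauFun])
  funext i
  fin_cases i <;> simp [tauFun]

lemma tau_smul (n : ℕ) (c : ℝ) (x : Gg n) : tauFun n (c • x) = c • tauFun n x := by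
  refine Prod.ext ?_ (by simp [tauFun])
  funext i
  fin_cases i <;> simp [tauFun]

lemma tau_zero (n : ℕ) : tauFun n (0 : Gg n) = 0 := by
  refine Prod.ext ?_ (by simp [tauFun])
  funext i
  fin_cases i <;> simp [tauFun]

lemma tau_Y (n : ℕ) : tauFun n (bY n) = bX n := by
  refine Prod.ext ?_ (by simp [tauFun, bY, bX])
  funext i
  fin_cases i <;> simp [tauFun, bY, bX]

lemma tau_H (n : ℕ) : tauFun n (bH n) = bH n := by
  refine Prod.ext ?_ (by simp [tauFun, bH])
  funext i
  fin_cases i <;> simp [tauFun, bH]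

lemma tau_E (n : ℕ) : tauFun n (bE n) = bE n := by
  refine Prod.ext ?_ (by simp [tauFun, bE])
  funext i
  fin_cases i <;> simp [tauFun, bE]

/-- with the grading `wght Y = 1`, `wght H = wght E = 0`, `wght X = -1`,
`wght ε_i = -i`, `wght η = 5-2n` (the case `k = n-4`):
(1) distinct graded components of `g` are orthogonal for `(·,·)`;
(2) `τ` maps the weight-`p` part of `span{Y,H,E}` into the weight `-p` part of `g`
for every `p ≥ 0`;
(3) `([A,x], y) = (x, [τ(A), y])` for all `x, y ∈ g` and `A ∈ span{Y,H,E}`. -/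
theorem morimoto_data_for_symplectic_symbol (n : ℕ) (hn : 6 ≤ n) :
    (∀ p q : ℤ, p ≠ q → ∀ x ∈ gComp n (n-4) p, ∀ y ∈ gComp n (n-4) q, Bform n x y = 0) ∧
    (∀ p : ℤ, 0 ≤ p → ∀ x : Gg n, x ∈ Submodule.span ℝ {bY n, bH n, bE n} →
      x ∈ gComp n (n-4) p → tauFun n x ∈ gComp n (n-4) (-p)) ∧
    (∀ A ∈ Submodule.span ℝ {bY n, bH n, bE n}, ∀ x y : Gg n,
      Bform n (gBr n A x) y = Bform n x (gBr n (tauFun n A) y)) := by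
  refine ⟨?_, ?_, ?_⟩
  · -- Part 1: orthogonality of distinct graded components
    intro p q hpq x hx y hy
    simp only [gComp] at hx hy
    induction hx using Submodule.span_induction with
    | mem u hu =>
      induction hy using Submodule.span_induction with
      | mem v hv => exact Bform_gen n (n-4) p q hpq u v hu hv
      | zero => exact Bform_zero_right n u
      | add y₁ y₂ h₁ h₂ ih₁ ih₂ => rw [Bform_add_right, ih₁, ih₂]; ring
      | smul c y₁ h₁ ih => rw [Bform_smul_right, ih]; ring
    | zero => exact Bform_zero_left n y
    | add x₁ x₂ h₁ h₂ ih₁ ih₂ => rw [Bform_add_left, ih₁, ih₂]; ring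
    | smul c x₁ h₁ ih => rw [Bform_smul_left, ih]; ring
  · -- Part 2: τ maps weight p to weight -p
    intro p hp x hsp hx
    clear hsp
    simp only [gComp] at hx ⊢
    induction hx using Submodule.span_induction with
    | mem u hu =>
      rcases hu with ⟨hu, hw⟩ | ⟨(hu | hu), hw⟩ | ⟨hu, hw⟩ | ⟨r, hr1, hr2, hu, hw⟩ | ⟨hu, hw⟩
      · subst hu; subst hw
        rw [tau_Y]
        exact Submodule.subset_span (Or.inr (Or.inr (Or.inl ⟨rfl, by norm_num⟩)))
      · subst hu; subst hw
        rw [tau_H]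
        exact Submodule.subset_span (Or.inr (Or.inl ⟨Or.inl rfl, by norm_num⟩))
      · subst hu; subst hw
        rw [tau_E]
        exact Submodule.subset_span (Or.inr (Or.inl ⟨Or.inr rfl, by norm_num⟩))
      · exfalso; omega
      · exfalso; omega
      · exfalso; omega
    | zero => rw [tau_zero]; exact Submodule.zero_mem _
    | add a b ha hb iha ihb => rw [tau_add]; exact Submodule.add_mem _ iha ihb
    | smul c a ha ih => rw [tau_smul]; exact Submodule.smul_mem _ _ ih
  · -- Part 3: adjointness
    intro A hA x y
    have hA30 : A.1 3 = 0 ∧ A.2 = 0 := by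
      induction hA using Submodule.span_induction with
      | mem u hu =>
        simp only [Set.mem_insert_iff, Set.mem_singleton_iff] at hu
        rcases hu with rfl | rfl | rfl <;>
          exact ⟨by simp [bY, bH, bE], rfl⟩
      | zero => exact ⟨rfl, rfl⟩
      | add a b ha hb iha ihb =>
        exact ⟨by simp [iha.1, ihb.1], by simp [iha.2, ihb.2]⟩
      | smul c a ha ih => exact ⟨by simp [ih.1], by simp [ih.2]⟩
    exact adj_key n hn A hA30.1 hA30.2 x y
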